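/- Let n₁ ≤ n₂ be integers and for each i ∈ [n₁, n₂] let wᵢ : X → [0,∞] and gᵢ : X → X describe a weighted deterministic step. Define the loop kernel L(x) inductively: L(x) = δ_x if n₁ > n₂, and otherwise L(x)(U) = ∫ (w_{n₁}(x)·δ_{g_{n₁}(x)})(dy) · L'(y)(U) where L' is the loop kernel for the range [n₁+1, n₂]. Then L(x) = (∏_{i=n₁}^{n₂} w_i(x_i)) · δ_{x_{n₂+1}}, where x_{n₁} = x and x_{i+1} = g_i(x_i). -/

import Mathlib

open MeasureTheory

/-- Loop kernel: sequentially run weighted deterministic steps. -/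
noncomputable def loopMeas {X : Type*} [MeasurableSpace X] :
    List ((X → ENNReal) × (X → X)) → X → Set X → ENNReal
  | [], x, U => Measure.dirac x U
  | (w, g) :: rest, x, U => ∫⁻ y, loopMeas rest y U ∂(w x • Measure.dirac (g x))

/-- Iterated state transition of the loop. -/
def iterState {X : Type*} : List ((X → ENNReal) × (X → X)) → X → X
  | [], x => x
  | (_, g) :: rest, x => iterState rest (g x)

/-- Product of per-iteration scores along the trajectory. -/
noncomputable def prodW {X : Type*} : List ((X → ENNReal) × (X → X)) → X → ENNReal
  | [], _ => 1
  | (w, g) :: rest, x => w x * prodW rest (g x)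

lemma prodW_measurable {X : Type*} [MeasurableSpace X]
    (steps : List ((X → ENNReal) × (X → X)))
    (hw : ∀ p ∈ steps, Measurable p.1) (hg : ∀ p ∈ steps, Measurable p.2) :
    Measurable (prodW steps) := by
  induction steps with
  | nil => simpa [prodW] using measurable_const
  | cons p rest ih =>
    obtain ⟨w, g⟩ := p
    have hwm : Measurable w := hw _ (List.mem_cons_self)
    have hgm : Measurable g := hg _ (List.mem_cons_self)
    have ihm : Measurable (prodW rest) :=
      ih (fun q hq => hw q (List.mem_cons_of_mem _ hq))
        (fun q hq => hg q (List.mem_cons_of_mem _ hq))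
    exact hwm.mul (ihm.comp hgm)

lemma iterState_measurable {X : Type*} [MeasurableSpace X]
    (steps : List ((X → ENNReal) × (X → X)))
    (hg : ∀ p ∈ steps, Measurable p.2) :
    Measurable (iterState steps) := by
  induction steps with
  | nil => simpa [iterState] using measurable_id'
  | cons p rest ih =>
    obtain ⟨w, g⟩ := p
    exact (ih (fun q hq => hg q (List.mem_cons_of_mem _ hq))).comp
      (hg _ (List.mem_cons_self))

theorem loop_compilation_correct {X : Type*} [MeasurableSpace X]
    (steps : List ((X → ENNReal) × (X → X)))
    (hw : ∀ p ∈ steps, Measurable p.1) (hg : ∀ p ∈ steps, Measurable p.2)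
    (x : X) (U : Set X) (hU : MeasurableSet U) :
    loopMeas steps x U = prodW steps x * Measure.dirac (iterState steps x) U := by
  induction steps generalizing x with
  | nil => simp [loopMeas, prodW, iterState]
  | cons p rest ih =>
    obtain ⟨w, g⟩ := p
    have hw' : ∀ q ∈ rest, Measurable q.1 := fun q hq => hw q (List.mem_cons_of_mem _ hq)
    have hg' : ∀ q ∈ rest, Measurable q.2 := fun q hq => hg q (List.mem_cons_of_mem _ hq)
    have hmeas : Measurable fun y => prodW rest y * Measure.dirac (iterState rest y) U := by
      have : (fun y => prodW rest y * Measure.dirac (iterState rest y) U)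
          = fun y => prodW rest y * U.indicator (fun _ => 1) (iterState rest y) := by
        funext y; rw [Measure.dirac_apply' _ hU]; rfl
      rw [this]
      exact (prodW_measurable rest hw' hg').mul
        ((measurable_const.indicator hU).comp (iterState_measurable rest hg'))
    calc loopMeas ((w, g) :: rest) x U
        = ∫⁻ y, loopMeas rest y U ∂(w x • Measure.dirac (g x)) := rfl
      _ = ∫⁻ y, prodW rest y * Measure.dirac (iterState rest y) U
            ∂(w x • Measure.dirac (g x)) := by
          congr 1; funext y; exact ih hw' hg' y
      _ = w x * (prodW rest (g x) * Measure.dirac (iterState rest (g x)) U) := by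
          rw [lintegral_smul_measure, lintegral_dirac' _ hmeas, smul_eq_mul]
      _ = _ := by rw [prodW, iterState, mul_assoc]
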